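/- Every L^0-linear derivation δ: U → L⁺(D) of an algebra U containing F⁺(D) := F(D) ∩ L⁺(D) is inner: there exists x ∈ L⁺(D) with δ(a) = xa − ax for all a ∈ U. In particular, every L^0-linear derivation of L⁺(D) is inner. -/

import Mathlib

open MeasureTheory

namespace KHPaper

variable {Ω : Type} [MeasurableSpace Ω] {μ : Measure Ω}

/-- `L⁰(Ω)`: measurable complex functions modulo a.e. equality. -/
abbrev L0 (Ω : Type) [MeasurableSpace Ω] (μ : Measure Ω) := Ω →ₘ[μ] ℂ
/-- real-valued `L⁰`. -/
abbrev L0R (Ω : Type) [MeasurableSpace Ω] (μ : Measure Ω) := Ω →ₘ[μ] ℝ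

noncomputable instance : CommRing (L0 Ω μ) :=
  { (inferInstance : AddCommGroup (L0 Ω μ)),
    (inferInstance : CommMonoid (L0 Ω μ)) with
    left_distrib := by
      intro a b c
      apply AEEqFun.ext
      filter_upwards [AEEqFun.coeFn_mul a (b + c), AEEqFun.coeFn_add b c,
        AEEqFun.coeFn_mul a b, AEEqFun.coeFn_mul a c,
        AEEqFun.coeFn_add (a * b) (a * c)] with x h1 h2 h3 h4 h5
      simp only [h1, h5, Pi.mul_apply, Pi.add_apply, h2, h3, h4, mul_add]
    right_distrib := by
      intro a b c
      apply AEEqFun.ext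
      filter_upwards [AEEqFun.coeFn_mul (a + b) c, AEEqFun.coeFn_add a b,
        AEEqFun.coeFn_mul a c, AEEqFun.coeFn_mul b c,
        AEEqFun.coeFn_add (a * c) (b * c)] with x h1 h2 h3 h4 h5
      simp only [h1, h5, Pi.mul_apply, Pi.add_apply, h2, h3, h4, add_mul]
    zero_mul := by
      intro a
      apply AEEqFun.ext
      filter_upwards [AEEqFun.coeFn_mul 0 a, AEEqFun.coeFn_zero (β := ℂ) (μ := μ)] with x h1 h2
      simp [h1, h2]
    mul_zero := by
      intro a
      apply AEEqFun.ext
      filter_upwards [AEEqFun.coeFn_mul a 0, AEEqFun.coeFn_zero (β := ℂ) (μ := μ)] with x h1 h2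
      simp [h1, h2] }

/-- pointwise absolute value `L⁰ → L⁰ℝ`. -/
noncomputable def absL (f : L0 Ω μ) : L0R Ω μ := f.comp (fun z : ℂ => ‖z‖) continuous_norm
/-- pointwise real part. -/
noncomputable def reL (f : L0 Ω μ) : L0R Ω μ := f.comp Complex.re Complex.continuous_re
/-- pointwise complex conjugation. -/
noncomputable def conjL (f : L0 Ω μ) : L0 Ω μ :=
  f.comp (starRingEnd ℂ) (by continuity)
/-- embedding of real `L⁰` into complex `L⁰`. -/
noncomputable def ofRealL (f : L0R Ω μ) : L0 Ω μ := f.comp Complex.ofReal Complex.continuous_ofReal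
/-- pointwise square root on real `L⁰`. -/
noncomputable def sqrtL (f : L0R Ω μ) : L0R Ω μ := f.comp Real.sqrt Real.continuous_sqrt
/-- constants. -/
noncomputable def constL (Ω : Type) [MeasurableSpace Ω] (μ : Measure Ω) (c : ℂ) : L0 Ω μ :=
  AEEqFun.const Ω c

/-- idempotents of `L⁰` (the Boolean algebra `∇`). -/
def IsIdem (π : L0 Ω μ) : Prop := π * π = π

/-- A family of idempotents is a partition of the unit in `∇`. -/
def IsPartition {ι : Type*} (π : ι → L0 Ω μ) : Prop :=
  (∀ i, IsIdem (π i)) ∧ (∀ i j, i ≠ j → π i * π j = 0) ∧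
    (∀ e : L0 Ω μ, IsIdem e → (∀ i, π i * e = 0) → e = 0)

/-- a decreasing net of nonnegative elements of `L⁰ℝ` has infimum zero. -/
def InfZero {ι : Type*} (e : ι → L0R Ω μ) : Prop :=
  (∀ i, 0 ≤ e i) ∧ ∀ g : L0R Ω μ, (∀ i, g ≤ e i) → g ≤ 0

/-- `(o)`-convergence of a net in `L⁰ℝ`. -/
def OConv {ι : Type*} [Preorder ι] (f : ι → L0R Ω μ) (l : L0R Ω μ) : Prop :=
  ∃ e : ι → L0R Ω μ, Antitone e ∧ InfZero e ∧ ∀ i, |f i - l| ≤ e i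

/-- `(o)`-summability of a family in `L⁰ℝ` (order convergence of the net of partial sums). -/
def OSummable {ι : Type*} (g : ι → L0R Ω μ) : Prop :=
  ∃ s : L0R Ω μ, OConv (fun F : Finset ι => ∑ i ∈ F, g i) s

section LNS

variable {X : Type*} [AddCommGroup X]

/-- An `L⁰`-valued norm making `X` a lattice-normed space over `L⁰` (complex vector space case). -/
structure LNSNorm (Ω : Type) [MeasurableSpace Ω] (μ : Measure Ω)
    (X : Type*) [AddCommGroup X] [Module ℂ X] where
  nrm : X → L0R Ω μ
  nrm_nonneg : ∀ x, 0 ≤ nrm x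
  nrm_eq_zero : ∀ x, nrm x = 0 ↔ x = 0
  nrm_smul : ∀ (c : ℂ) (x : X), nrm (c • x) = ‖c‖ • nrm x
  nrm_triangle : ∀ x y, nrm (x + y) ≤ nrm x + nrm y

variable [Module ℂ X]

/-- `d`-decomposability (Kantorovich norm). -/
def LNSNorm.DDecomp (N : LNSNorm Ω μ X) : Prop :=
  ∀ (x : X) (e₁ e₂ : L0R Ω μ), 0 ≤ e₁ → 0 ≤ e₂ → e₁ ⊓ e₂ = 0 → N.nrm x = e₁ + e₂ →
    ∃ x₁ x₂ : X, x = x₁ + x₂ ∧ N.nrm x₁ = e₁ ∧ N.nrm x₂ = e₂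

/-- `(bo)`-convergence of a net in `X`. -/
def LNSNorm.BOConv (N : LNSNorm Ω μ X) {ι : Type*} [Preorder ι] (f : ι → X) (l : X) : Prop :=
  OConv (fun i => N.nrm (f i - l)) 0

/-- `(bo)`-Cauchy nets. -/
def LNSNorm.BOCauchy (N : LNSNorm Ω μ X) {ι : Type*} [Preorder ι] (f : ι → X) : Prop :=
  ∃ e : ι → L0R Ω μ, Antitone e ∧ InfZero e ∧
    ∀ i j k, k ≤ i → k ≤ j → N.nrm (f i - f j) ≤ e k

/-- `(bo)`-completeness. -/
def LNSNorm.BOComplete (N : LNSNorm Ω μ X) : Prop :=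
  ∀ (ι : Type) (_ : Nonempty ι) (_ : SemilatticeSup ι) (f : ι → X),
    N.BOCauchy f → ∃ l : X, N.BOConv f l

end LNS

section Norms
variable {X : Type*} [AddCommGroup X]
def DDecompN (nrm : X → L0R Ω μ) : Prop :=
  ∀ (x : X) (e₁ e₂ : L0R Ω μ), 0 ≤ e₁ → 0 ≤ e₂ → e₁ ⊓ e₂ = 0 → nrm x = e₁ + e₂ →
    ∃ x₁ x₂ : X, x = x₁ + x₂ ∧ nrm x₁ = e₁ ∧ nrm x₂ = e₂
def BOConvN (nrm : X → L0R Ω μ) {ι : Type*} [Preorder ι] (f : ι → X) (l : X) : Prop :=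
  OConv (fun i => nrm (f i - l)) 0
def BOCauchyN (nrm : X → L0R Ω μ) {ι : Type*} [Preorder ι] (f : ι → X) : Prop :=
  ∃ e : ι → L0R Ω μ, Antitone e ∧ InfZero e ∧
    ∀ i j k, k ≤ i → k ≤ j → nrm (f i - f j) ≤ e k
def BOCompleteN (nrm : X → L0R Ω μ) : Prop :=
  ∀ (ι : Type) (_ : Nonempty ι) (_ : SemilatticeSup ι) (f : ι → X),
    BOCauchyN nrm f → ∃ l : X, BOConvN nrm f l
def BODenseN (nrm : X → L0R Ω μ) (D : Set X) : Prop :=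
  ∀ x : X, ∃ (ι : Type) (_ : Nonempty ι) (_ : SemilatticeSup ι) (f : ι → X),
    (∀ i, f i ∈ D) ∧ BOConvN nrm f x
end Norms

/-- An `L⁰`-valued inner product on an `L⁰`-module. -/
structure KHInner (Ω : Type) [MeasurableSpace Ω] (μ : Measure Ω)
    (X : Type*) [AddCommGroup X] [Module (L0 Ω μ) X] where
  inner : X → X → L0 Ω μ
  add_left : ∀ x y z, inner (x + y) z = inner x z + inner y z
  smul_left : ∀ (c : L0 Ω μ) (x y : X), inner (c • x) y = c * inner x y
  conj_symm : ∀ x y, inner x y = conjL (inner y x)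
  self_real : ∀ x, inner x x = ofRealL (reL (inner x x))
  self_nonneg : ∀ x, 0 ≤ reL (inner x x)
  definite : ∀ x, inner x x = 0 → x = 0

section KH
variable {X : Type*} [AddCommGroup X] [Module (L0 Ω μ) X]
noncomputable def KHInner.knorm (K : KHInner Ω μ X) (x : X) : L0R Ω μ :=
  sqrtL (reL (K.inner x x))
/-- `X` is a Kaplansky-Hilbert module: the induced norm is d-decomposable and (bo)-complete. -/
def KHInner.IsKH (K : KHInner Ω μ X) : Prop := DDecompN K.knorm ∧ BOCompleteN K.knorm

variable (K : KHInner Ω μ X) (D : Submodule (L0 Ω μ) X)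
/-- operators with domain `D` mapping into `D`. -/
def MapsD (a : D →ₗ[L0 Ω μ] X) : Prop := ∀ φ : D, a φ ∈ D
def IsAdjAt (a : D →ₗ[L0 Ω μ] X) (ψ χ : X) : Prop :=
  ∀ φ : D, K.inner (a φ) ψ = K.inner (φ : X) χ
def AdjDomain (a : D →ₗ[L0 Ω μ] X) : Set X := {ψ | ∃ χ, IsAdjAt K D a ψ χ}
/-- `L⁺(D)`. -/
def LPlus : Set (D →ₗ[L0 Ω μ] X) :=
  {a | MapsD D a ∧ (D : Set X) ⊆ AdjDomain K D a ∧
       ∀ ψ ∈ D, ∃ χ ∈ D, IsAdjAt K D a ψ χ}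
def BOClosableOp (a : D →ₗ[L0 Ω μ] X) : Prop :=
  ∀ (ι : Type) (_ : Nonempty ι) (_ : SemilatticeSup ι) (f : ι → D) (y : X),
    BOConvN K.knorm (fun i => (f i : X)) 0 → BOConvN K.knorm (fun i => a (f i)) y → y = 0
/-- composition `a ∘ b` of operators on `D`, when `b` maps into `D`. -/
noncomputable def compD (a b : D →ₗ[L0 Ω μ] X) (hb : MapsD D b) : D →ₗ[L0 Ω μ] X :=
  a.comp (LinearMap.codRestrict D b hb)

/-- endomorphism version: an operator on `D` having an adjoint with domain `⊇ D` and values in `D`. -/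
def HasAdjE (a : Module.End (L0 Ω μ) D) : Prop :=
  ∀ ψ : D, ∃ χ : D, ∀ φ : D, K.inner (a φ : X) (ψ : X) = K.inner (φ : X) (χ : X)
/-- `L⁺(D)` realized inside `End(D)`. -/
def LPlusE : Set (Module.End (L0 Ω μ) D) := {a | HasAdjE K D a}
def IsAdjPairE (a b : Module.End (L0 Ω μ) D) : Prop :=
  ∀ φ ψ : D, K.inner (a φ : X) (ψ : X) = K.inner (φ : X) (b ψ : X)
/-- the rank one operator `φ ⊗ ψ` on `D`. -/
noncomputable def rankOneE (φ ψ : D) : Module.End (L0 Ω μ) D where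
  toFun η := K.inner (η : X) (ψ : X) • φ
  map_add' a b := by
    show K.inner (↑(a + b)) _ • φ = _
    rw [Submodule.coe_add, K.add_left]
    exact add_smul _ _ φ
  map_smul' c a := by
    show K.inner (↑(c • a)) _ • φ = _
    rw [Submodule.coe_smul, K.smul_left, RingHom.id_apply]
    exact mul_smul c _ φ
end KH

section Ops
variable {M : Type*} [AddCommGroup M] [Module (L0 Ω μ) M]
/-- finite-generated operator: its range is a finite-generated submodule. -/
def FinGenOp (a : Module.End (L0 Ω μ) M) : Prop :=
  ∃ (n : ℕ) (g : Fin n → M), ∀ x : M, ∃ c : Fin n → L0 Ω μ, a x = ∑ i, c i • g i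
def IsSubalgebraSet (U : Set (Module.End (L0 Ω μ) M)) : Prop :=
  (∀ a ∈ U, ∀ b ∈ U, a + b ∈ U) ∧ (∀ (c : L0 Ω μ), ∀ a ∈ U, c • a ∈ U) ∧
    (∀ a ∈ U, ∀ b ∈ U, a * b ∈ U)
/-- standard algebras of operators: subalgebras containing all finite-generated operators. -/
def IsStandard (U : Set (Module.End (L0 Ω μ) M)) : Prop :=
  IsSubalgebraSet U ∧ ∀ a, FinGenOp a → a ∈ U
/-- the operator `a` is homogeneous of type one: `d(π ⬝ a(M)) = 1` for every nonzero idempotent. -/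
def HomogOneOp (a : Module.End (L0 Ω μ) M) : Prop :=
  ∀ π : L0 Ω μ, IsIdem π → π ≠ 0 →
    (∃ g ∈ Set.range a, ∀ x ∈ Set.range a, ∃ c : L0 Ω μ, π • x = c • (π • g)) ∧
    ∃ x ∈ Set.range a, π • x ≠ 0
end Ops

section DirectSum
variable {I : Type} [DecidableEq I] {X : I → Type*}
  [∀ i, AddCommGroup (X i)] [∀ i, Module (L0 Ω μ) (X i)]
  (K : ∀ i, KHInner Ω μ (X i)) (D : ∀ i, Submodule (L0 Ω μ) (X i))

/-- `D_I`: the submodule of the direct sum consisting of finitely supported tuples. -/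
abbrev DI (D : ∀ i, Submodule (L0 Ω μ) (X i)) := Π₀ i, ↥(D i)

/-- the inner product of `X_I` restricted to `D_I`. -/
noncomputable def innerDI (φ ψ : DI D) : L0 Ω μ :=
  letI : ∀ (i : I) (x : ↥(D i)), Decidable (x ≠ 0) := fun _ x => Classical.dec _
  φ.sum fun i x => (K i).inner (x : X i) ((ψ i : X i))

/-- the canonical copy of an operator on `D i` acting on `D_I`. -/
noncomputable def coordOp (i : I) (b : Module.End (L0 Ω μ) ↥(D i)) :
    Module.End (L0 Ω μ) (DI D) :=
  (DFinsupp.lsingle (R := L0 Ω μ) i).comp (b.comp (DFinsupp.lapply (R := L0 Ω μ) i))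

/-- the canonical copy of the rank one operator `φ ⊗ φ`, `φ ∈ D i`, on `D_I`. -/
noncomputable def coordRankOne (i : I) (φ : ↥(D i)) : Module.End (L0 Ω μ) (DI D) :=
  coordOp D i (rankOneE (K i) (D i) φ φ)

/-- coordinatewise operators `(a_i)` with each `a_i ∈ L⁺(D_i)`: the algebra `L⁺(D_i : i ∈ I)`. -/
def CoordLPlus : Set (Module.End (L0 Ω μ) (DI D)) :=
  {a | ∃ f : ∀ i, Module.End (L0 Ω μ) ↥(D i),
    (∀ i, HasAdjE (K i) (D i) (f i)) ∧ ∀ (φ : DI D) (i : I), a φ i = f i (φ i)}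

/-- adjoint pairs on `D_I`. -/
def IsAdjPairDI (a b : Module.End (L0 Ω μ) (DI D)) : Prop :=
  ∀ φ ψ : DI D, innerDI K D (a φ) ψ = innerDI K D φ (b ψ)

/-- the maximal `O*`-algebra `L⁺(D_I)`. -/
def LPlusDI : Set (Module.End (L0 Ω μ) (DI D)) :=
  {a | ∃ b, IsAdjPairDI K D a b}

/-- `*`-subalgebras of operators on `D_I`. -/
def IsStarSubalgDI (A : Set (Module.End (L0 Ω μ) (DI D))) : Prop :=
  IsSubalgebraSet A ∧ ∀ a ∈ A, ∃ b ∈ A, IsAdjPairDI K D a b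

/-- projections on `D_I`: idempotent and self-adjoint. -/
def IsProjDI (p : Module.End (L0 Ω μ) (DI D)) : Prop :=
  p * p = p ∧ IsAdjPairDI K D p p

/-- the range of `p` is concentrated on a single coordinate. -/
def SingleCoordRange (p : Module.End (L0 Ω μ) (DI D)) : Prop :=
  ∃ i : I, ∀ (φ : DI D) (j : I), j ≠ i → p φ j = 0

/-- `M(A)`: rank one projections in `A` whose range generators have a unique
nonzero coordinate. -/
def MSet (A : Set (Module.End (L0 Ω μ) (DI D))) :
    Set (Module.End (L0 Ω μ) (DI D)) :=
  {p | p ∈ A ∧ IsProjDI K D p ∧ HomogOneOp p ∧ SingleCoordRange D p}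

end DirectSum
/-- A Banach–Kantorovich space over `L⁰` with its `L⁰`-module structure. -/
structure BKSpace (Ω : Type) [MeasurableSpace Ω] (μ : Measure Ω)
    (X : Type*) [AddCommGroup X] [Module (L0 Ω μ) X] where
  nrm : X → L0R Ω μ
  nrm_nonneg : ∀ x, 0 ≤ nrm x
  nrm_eq_zero : ∀ x, nrm x = 0 ↔ x = 0
  nrm_smul : ∀ (c : L0 Ω μ) (x : X), nrm (c • x) = absL c * nrm x
  nrm_triangle : ∀ x y, nrm (x + y) ≤ nrm x + nrm y
  ddecomp : DDecompN nrm
  complete : BOCompleteN nrm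



section DerivationHelpers

variable {Ω : Type} [MeasurableSpace Ω] {μ : Measure Ω}

lemma conjL_coe (f : L0 Ω μ) : ⇑(conjL f) =ᵐ[μ] fun ω => (starRingEnd ℂ) (f ω) :=
  AEEqFun.coeFn_comp _ _ f

lemma sqrtL_coe (f : L0R Ω μ) : ⇑(sqrtL f) =ᵐ[μ] fun ω => Real.sqrt (f ω) :=
  AEEqFun.coeFn_comp _ _ f

lemma ofRealL_coe (f : L0R Ω μ) : ⇑(ofRealL f) =ᵐ[μ] fun ω => ((f ω : ℝ) : ℂ) :=
  AEEqFun.coeFn_comp _ _ f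

lemma conjL_add (f g : L0 Ω μ) : conjL (f + g) = conjL f + conjL g := by
  apply AEEqFun.ext
  filter_upwards [conjL_coe (f + g), AEEqFun.coeFn_add f g,
    AEEqFun.coeFn_add (conjL f) (conjL g), conjL_coe f, conjL_coe g] with ω h1 h2 h3 h4 h5
  simp only [h1, h2, h3, Pi.add_apply, h4, h5, map_add]

lemma conjL_mul (f g : L0 Ω μ) : conjL (f * g) = conjL f * conjL g := by
  apply AEEqFun.ext
  filter_upwards [conjL_coe (f * g), AEEqFun.coeFn_mul f g,
    AEEqFun.coeFn_mul (conjL f) (conjL g), conjL_coe f, conjL_coe g] with ω h1 h2 h3 h4 h5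
  simp only [h1, h2, h3, Pi.mul_apply, h4, h5, map_mul]

lemma conjL_conjL (f : L0 Ω μ) : conjL (conjL f) = f := by
  apply AEEqFun.ext
  filter_upwards [conjL_coe (conjL f), conjL_coe f] with ω h1 h2
  simp only [h1, h2, Complex.conj_conj]

variable {X : Type*} [AddCommGroup X] [Module (L0 Ω μ) X]

lemma inner_self_eq_one (K : KHInner Ω μ X) {x : X} (h : K.knorm x = 1) :
    K.inner x x = 1 := by
  have hre : reL (K.inner x x) = 1 := by
    have h0 : (0 : L0R Ω μ) ≤ reL (K.inner x x) := K.self_nonneg x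
    rw [← AEEqFun.coeFn_le] at h0
    have h' : sqrtL (reL (K.inner x x)) = (1 : L0R Ω μ) := h
    have hce : ⇑(sqrtL (reL (K.inner x x))) =ᵐ[μ] ⇑(1 : L0R Ω μ) := by rw [h']
    apply AEEqFun.ext
    filter_upwards [sqrtL_coe (reL (K.inner x x)), hce,
      AEEqFun.coeFn_one (β := ℝ) (μ := μ), AEEqFun.coeFn_zero (β := ℝ) (μ := μ), h0]
      with ω h1 h2 h3 h4 h5
    rw [h4] at h5
    have hsq : Real.sqrt (reL (K.inner x x) ω) = 1 := by
      rw [← h1, h2, h3, Pi.one_apply]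
    have := Real.sq_sqrt h5
    rw [h3, Pi.one_apply, ← this, hsq]
    norm_num
  rw [K.self_real x, hre]
  apply AEEqFun.ext
  filter_upwards [ofRealL_coe (1 : L0R Ω μ), AEEqFun.coeFn_one (β := ℝ) (μ := μ),
    AEEqFun.coeFn_one (β := ℂ) (μ := μ)] with ω h1 h2 h3
  rw [h1, h2, h3]
  simp

variable (K : KHInner Ω μ X)

lemma inner_add_right (x y z : X) :
    K.inner x (y + z) = K.inner x y + K.inner x z := by
  rw [K.conj_symm x (y + z), K.add_left, conjL_add, ← K.conj_symm, ← K.conj_symm]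

lemma inner_smul_right (c : L0 Ω μ) (x y : X) :
    K.inner x (c • y) = conjL c * K.inner x y := by
  rw [K.conj_symm x (c • y), K.smul_left, conjL_mul, ← K.conj_symm]

lemma inner_sub_right (x y z : X) :
    K.inner x (y - z) = K.inner x y - K.inner x z := by
  have h := inner_add_right K x (y - z) z
  rw [sub_add_cancel] at h
  exact eq_sub_of_add_eq h.symm

variable (D : Submodule (L0 Ω μ) X)

lemma rankOneE_finGen (φ ψ : D) : FinGenOp (rankOneE K D φ ψ) := by
  refine ⟨1, fun _ => φ, fun x => ⟨fun _ => K.inner (x : X) (ψ : X), ?_⟩⟩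
  rw [Fin.sum_univ_one]
  rfl

lemma rankOneE_hasAdj (φ ψ : D) : HasAdjE K D (rankOneE K D φ ψ) := by
  intro ψ'
  refine ⟨K.inner (ψ' : X) (φ : X) • ψ, fun η => ?_⟩
  have h1 : ((rankOneE K D φ ψ η : D) : X) = K.inner (η : X) (ψ : X) • (φ : X) := rfl
  rw [h1, K.smul_left, Submodule.coe_smul, inner_smul_right, ← K.conj_symm]
  ring

end DerivationHelpers

/-- Every `L⁰`-linear derivation `δ : U → L⁺(D)` of an algebra
`U ⊇ F⁺(D) = F(D) ∩ L⁺(D)` is inner, with the implementing operator in `L⁺(D)`. -/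
theorem statement9 {X : Type*} [AddCommGroup X] [Module (L0 Ω μ) X]
    (K : KHInner Ω μ X) (hK : K.IsKH) (D : Submodule (L0 Ω μ) X)
    (hD : BODenseN K.knorm (D : Set X))
    (e : D) (he : K.knorm (e : X) = 1)
    (U : Set (Module.End (L0 Ω μ) D)) (hUsub : IsSubalgebraSet U)
    (hUL : U ⊆ LPlusE K D)
    (hF : ∀ a : Module.End (L0 Ω μ) D, FinGenOp a → a ∈ LPlusE K D → a ∈ U)
    (δ : Module.End (L0 Ω μ) D → Module.End (L0 Ω μ) D)
    (hδL : ∀ a ∈ U, δ a ∈ LPlusE K D)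
    (hadd : ∀ a ∈ U, ∀ b ∈ U, δ (a + b) = δ a + δ b)
    (hsmul : ∀ c : L0 Ω μ, ∀ a ∈ U, δ (c • a) = c • δ a)
    (hder : ∀ a ∈ U, ∀ b ∈ U, δ (a * b) = δ a * b + a * δ b) :
    ∃ x ∈ LPlusE K D, ∀ a ∈ U, δ a = x * a - a * x := by
  classical
  have hone : K.inner (e : X) (e : X) = 1 := inner_self_eq_one K he
  have hmem : ∀ φ ψ : D, rankOneE K D φ ψ ∈ U := fun φ ψ =>
    hF _ (rankOneE_finGen K D φ ψ) (rankOneE_hasAdj K D φ ψ)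
  have hT3 : ∀ φ : D, rankOneE K D φ e e = φ := by
    intro φ
    show K.inner (e : X) (e : X) • φ = φ
    rw [hone, one_smul]
  have hT1 : ∀ (a : Module.End (L0 Ω μ) D) (φ : D),
      a * rankOneE K D φ e = rankOneE K D (a φ) e := by
    intro a φ
    refine LinearMap.ext fun η => ?_
    show a (K.inner (η : X) (e : X) • φ) = K.inner (η : X) (e : X) • a φ
    exact a.map_smul _ _
  have hT2 : ∀ ψ φ : D, rankOneE K D e ψ * rankOneE K D φ e
      = K.inner (φ : X) (ψ : X) • rankOneE K D e e := by
    intro ψ φ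
    refine LinearMap.ext fun η => ?_
    show K.inner ((K.inner (η : X) (e : X) • φ : D) : X) (ψ : X) • e
      = K.inner (φ : X) (ψ : X) • (K.inner (η : X) (e : X) • e)
    rw [Submodule.coe_smul, K.smul_left, mul_comm, mul_smul]
  have hTadd : ∀ φ ψ : D, rankOneE K D (φ + ψ) e = rankOneE K D φ e + rankOneE K D ψ e := by
    intro φ ψ
    refine LinearMap.ext fun η => ?_
    show K.inner (η : X) (e : X) • (φ + ψ)
      = K.inner (η : X) (e : X) • φ + K.inner (η : X) (e : X) • ψ
    exact smul_add _ _ _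
  have hTsmul : ∀ (c : L0 Ω μ) (φ : D), rankOneE K D (c • φ) e = c • rankOneE K D φ e := by
    intro c φ
    refine LinearMap.ext fun η => ?_
    show K.inner (η : X) (e : X) • (c • φ) = c • (K.inner (η : X) (e : X) • φ)
    exact smul_comm _ _ _
  let x : Module.End (L0 Ω μ) D :=
    { toFun := fun φ => δ (rankOneE K D φ e) e
      map_add' := by
        intro φ ψ
        show δ (rankOneE K D (φ + ψ) e) e
          = δ (rankOneE K D φ e) e + δ (rankOneE K D ψ e) e
        rw [hTadd, hadd _ (hmem φ e) _ (hmem ψ e)]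
        rfl
      map_smul' := by
        intro c φ
        show δ (rankOneE K D (c • φ) e) e = c • δ (rankOneE K D φ e) e
        rw [hTsmul, hsmul c _ (hmem φ e)]
        rfl }
  have hmain : ∀ a ∈ U, ∀ φ : D, x (a φ) = δ a φ + a (x φ) := by
    intro a ha φ
    have h1 : rankOneE K D (a φ) e = a * rankOneE K D φ e := (hT1 a φ).symm
    have h2 : δ (a * rankOneE K D φ e)
        = δ a * rankOneE K D φ e + a * δ (rankOneE K D φ e) :=
      hder a ha _ (hmem φ e)
    show δ (rankOneE K D (a φ) e) e = δ a φ + a (δ (rankOneE K D φ e) e)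
    rw [h1, h2]
    show δ a (rankOneE K D φ e e) + a (δ (rankOneE K D φ e) e) = _
    rw [hT3]
  have hxadj : HasAdjE K D x := by
    intro ψ
    obtain ⟨χ₀, hχ₀⟩ := hδL _ (hmem e ψ) e
    refine ⟨conjL (K.inner ((δ (rankOneE K D e e) e : D) : X) (e : X)) • ψ - χ₀, fun φ => ?_⟩
    have h2 : δ (rankOneE K D e ψ * rankOneE K D φ e)
        = δ (rankOneE K D e ψ) * rankOneE K D φ e
          + rankOneE K D e ψ * δ (rankOneE K D φ e) :=
      hder _ (hmem e ψ) _ (hmem φ e)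
    rw [hT2 ψ φ, hsmul _ _ (hmem e e)] at h2
    have h3 : K.inner (φ : X) (ψ : X) • δ (rankOneE K D e e) e
        = δ (rankOneE K D e ψ) (rankOneE K D φ e e)
          + K.inner ((δ (rankOneE K D φ e) e : D) : X) (ψ : X) • e :=
      congrArg (fun f : Module.End (L0 Ω μ) D => f e) h2
    rw [hT3 φ] at h3
    have h5 := congrArg (fun z : D => K.inner (z : X) (e : X)) h3
    simp only [Submodule.coe_smul, Submodule.coe_add, K.smul_left, K.add_left] at h5
    rw [hχ₀ φ, hone, mul_one] at h5
    show K.inner ((δ (rankOneE K D φ e) e : D) : X) (ψ : X) = _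
    have hcoe : ((conjL (K.inner ((δ (rankOneE K D e e) e : D) : X) (e : X)) • ψ - χ₀ : D) : X)
        = conjL (K.inner ((δ (rankOneE K D e e) e : D) : X) (e : X)) • (ψ : X) - (χ₀ : X) := by
      push_cast
      ring
    rw [hcoe, inner_sub_right, inner_smul_right, conjL_conjL]
    linear_combination -h5
  refine ⟨x, hxadj, ?_⟩
  intro a ha
  refine LinearMap.ext fun φ => ?_
  show δ a φ = x (a φ) - a (x φ)
  rw [hmain a ha φ, add_sub_cancel_right]


end KHPaper
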